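/- Fix r > 0, G_ll > 0, nonnegative G_lj for j ≠ l, and σ > 0. Define SINR_l(p) = G_ll·p_l/(Σ_{j≠l} G_lj·p_j + σ) and I_l(p) = r·p_l / log(1 + SINR_l(p)) for p > 0 componentwise. Then I_l is monotone: if p ≥ q > 0 componentwise then I_l(p) ≥ I_l(q). -/

import Mathlib

open Finset

/-- Slope inequality for the concave function `log (1 + ·)`:
for `0 < s ≤ t`, `log(1+t)/t ≤ log(1+s)/s` in cross-multiplied form. -/
lemma shannon_key {s t : ℝ} (hs : 0 < s) (hst : s ≤ t) :
    s * Real.log (1 + t) ≤ t * Real.log (1 + s) := by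
  have ht : 0 < t := hs.trans_le hst
  have hcc := strictConcaveOn_log_Ioi.concaveOn
  have h1 : (1 : ℝ) ∈ Set.Ioi (0 : ℝ) := by norm_num
  have h2 : (1 + t) ∈ Set.Ioi (0 : ℝ) := by
    simp only [Set.mem_Ioi]; linarith
  have ha : 0 ≤ 1 - s / t := by
    rw [sub_nonneg]
    exact div_le_one_of_le₀ hst ht.le
  have hb : 0 ≤ s / t := by positivity
  have hab : (1 - s / t) + s / t = 1 := by ring
  have hcon := hcc.2 h1 h2 ha hb hab
  have harg : (1 - s / t) • (1 : ℝ) + (s / t) • (1 + t) = 1 + s := by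
    simp only [smul_eq_mul]; rw [mul_add, div_mul_cancel₀ s ht.ne']; ring
  rw [harg, Real.log_one, smul_eq_mul, smul_eq_mul, mul_zero, zero_add] at hcon
  have := mul_le_mul_of_nonneg_left hcon ht.le
  calc s * Real.log (1 + t) = t * (s / t * Real.log (1 + t)) := by
        field_simp
    _ ≤ t * Real.log (1 + s) := this

/-- Monotonicity of `x ↦ r x / log (1 + c x / D)` in both `x` and `D`. -/
lemma shannon_phi_mono (r c : ℝ) (hr : 0 < r) (hc : 0 < c)
    {x x' D D' : ℝ} (hx : 0 < x) (hxx : x ≤ x') (hD : 0 < D) (hDD : D ≤ D') :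
    r * x / Real.log (1 + c * x / D) ≤ r * x' / Real.log (1 + c * x' / D') := by
  have hx' : 0 < x' := hx.trans_le hxx
  have hD' : 0 < D' := hD.trans_le hDD
  have hs : 0 < c * x / D := by positivity
  have hs' : 0 < c * x' / D := by positivity
  have hs'' : 0 < c * x' / D' := by positivity
  have hlog1 : 0 < Real.log (1 + c * x / D) := Real.log_pos (by linarith)
  have hlog2 : 0 < Real.log (1 + c * x' / D) := Real.log_pos (by linarith)
  have hlog3 : 0 < Real.log (1 + c * x' / D') := Real.log_pos (by linarith)
  have step1 : r * x / Real.log (1 + c * x / D)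
      ≤ r * x' / Real.log (1 + c * x' / D) := by
    rw [div_le_div_iff₀ hlog1 hlog2]
    have hst : c * x / D ≤ c * x' / D := by
      gcongr
    have hk := shannon_key hs hst
    -- hk : (c*x/D) * log(1 + c*x'/D) ≤ (c*x'/D) * log(1 + c*x/D)
    rw [div_mul_eq_mul_div, div_mul_eq_mul_div, div_le_div_iff₀ hD hD] at hk
    nlinarith [mul_le_mul_of_nonneg_left hk hr.le, mul_pos hc hD]
  have step2 : r * x' / Real.log (1 + c * x' / D)
      ≤ r * x' / Real.log (1 + c * x' / D') := by
    apply div_le_div_of_nonneg_left (by positivity) hlog3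
    apply Real.log_le_log (by linarith)
    have : c * x' / D' ≤ c * x' / D := by
      apply div_le_div_of_nonneg_left (by positivity) hD hDD
    linarith
  linarith

/-- Monotonicity of the Shannon-capacity interference function:
if p ≥ q > 0 componentwise then I_l(q) ≤ I_l(p). -/
theorem shannon_interference_monotone {n : ℕ} (l : Fin n)
    (r : ℝ) (hr : 0 < r) (G : Fin n → ℝ) (hGll : 0 < G l)
    (hG : ∀ j, j ≠ l → 0 ≤ G j) (σ : ℝ) (hσ : 0 < σ) :
    let SINR : (Fin n → ℝ) → ℝ :=
      fun p => G l * p l / (∑ j ∈ univ.erase l, G j * p j + σ)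
    let I : (Fin n → ℝ) → ℝ := fun p => r * p l / Real.log (1 + SINR p)
    ∀ p q : Fin n → ℝ, (∀ i, 0 < q i) → q ≤ p → I q ≤ I p := by
  intro SINR I p q hq hpq
  have hD : 0 < ∑ j ∈ univ.erase l, G j * q j + σ := by
    have : 0 ≤ ∑ j ∈ univ.erase l, G j * q j :=
      Finset.sum_nonneg fun j hj =>
        mul_nonneg (hG j (Finset.ne_of_mem_erase hj)) (hq j).le
    linarith
  have hDD : (∑ j ∈ univ.erase l, G j * q j + σ)
      ≤ ∑ j ∈ univ.erase l, G j * p j + σ := by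
    have : (∑ j ∈ univ.erase l, G j * q j) ≤ ∑ j ∈ univ.erase l, G j * p j :=
      Finset.sum_le_sum fun j hj =>
        mul_le_mul_of_nonneg_left (hpq j) (hG j (Finset.ne_of_mem_erase hj))
    linarith
  simpa [SINR, I, mul_div_assoc] using
    shannon_phi_mono r (G l) hr hGll (hq l) (hpq l) hD hDD
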